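/- Gordan's Lemma: for a rational polyhedral cone σ ⊆ N, the monoid S_σ = σ∨ ∩ M_ℤ is finitely generated. -/

import Mathlib

/-- The real cone generated by a finite set of lattice points in `ℝⁿ`. -/
def ratConeOf {n : ℕ} (S : Finset (Fin n → ℤ)) : Set (Fin n → ℝ) :=
  {x | ∃ c : (Fin n → ℤ) → ℝ, (∀ v, 0 ≤ c v) ∧
    x = ∑ v ∈ S, c v • (fun i => (v i : ℝ))}

/-- The monoid of lattice points of the dual cone: `S_σ = σ∨ ∩ M_ℤ`. -/
def latticeDual {n : ℕ} (σ : Set (Fin n → ℝ)) : Set (Fin n → ℤ) :=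
  {u | ∀ v ∈ σ, 0 ≤ ∑ i, (u i : ℝ) * v i}

namespace GordanAux

variable {n : ℕ} (S : Finset (Fin n → ℤ))

def M : AddSubmonoid (Fin n → ℤ) where
  carrier := {u | ∀ v ∈ S, 0 ≤ ∑ i, u i * v i}
  zero_mem' := by intro v hv; simp
  add_mem' := by
    intro a b ha hb v hv
    have h1 := ha v hv
    have h2 := hb v hv
    have h3 : ∑ i, (a + b) i * v i = (∑ i, a i * v i) + ∑ i, b i * v i := by
      rw [← Finset.sum_add_distrib]
      exact Finset.sum_congr rfl fun i _ => by simp [add_mul]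
    rw [h3]; linarith

abbrev Idx (S : Finset (Fin n → ℤ)) := (Fin n ⊕ Fin n) ⊕ {v : Fin n → ℤ // v ∈ S}

def phi (S : Finset (Fin n → ℤ)) (u : Fin n → ℤ) : Idx S → ℕ :=
  Sum.elim (Sum.elim (fun i => (u i).toNat) (fun i => (-(u i)).toNat))
    (fun v => (∑ i, u i * v.1 i).toNat)

lemma phi_inj : Function.Injective (phi S) := by
  intro a b h
  funext i
  have h1 := congrFun h (Sum.inl (Sum.inl i))
  have h2 := congrFun h (Sum.inl (Sum.inr i))
  simp only [phi, Sum.elim_inl, Sum.elim_inr] at h1 h2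
  omega

def meas (u : Fin n → ℤ) : ℕ := ∑ i, (u i).natAbs

lemma sub_natAbs {u t : Fin n → ℤ} (h : phi S t ≤ phi S u) (i : Fin n) :
    (u i - t i).natAbs = (u i).natAbs - (t i).natAbs ∧ (t i).natAbs ≤ (u i).natAbs := by
  have h1 := h (Sum.inl (Sum.inl i))
  have h2 := h (Sum.inl (Sum.inr i))
  simp only [phi, Sum.elim_inl, Sum.elim_inr] at h1 h2
  omega

lemma meas_sub_lt {u t : Fin n → ℤ} (h : phi S t ≤ phi S u) (ht : t ≠ 0) :
    meas (u - t) < meas u := by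
  have key := sub_natAbs S h
  have hsub : meas (u - t) + meas t = meas u := by
    unfold meas
    rw [← Finset.sum_add_distrib]
    exact Finset.sum_congr rfl fun i _ => by
      have h1 := (key i).1; have h2 := (key i).2
      simp only [Pi.sub_apply]; omega
  have hpos : 0 < meas t := by
    obtain ⟨i, hi⟩ : ∃ i, t i ≠ 0 := by
      by_contra hc; push_neg at hc; exact ht (funext hc)
    exact Finset.sum_pos' (fun _ _ => Nat.zero_le _)
      ⟨i, Finset.mem_univ i, Int.natAbs_pos.2 hi⟩
  omega

lemma sub_mem {u t : Fin n → ℤ} (hu : u ∈ M S) (ht : t ∈ M S)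
    (h : phi S t ≤ phi S u) : u - t ∈ M S := by
  intro v hv
  have h3 := h (Sum.inr ⟨v, hv⟩)
  simp only [phi, Sum.elim_inr] at h3
  have hu' := hu v hv
  have ht' := ht v hv
  have hsub : ∑ i, (u - t) i * v i = (∑ i, u i * v i) - ∑ i, t i * v i := by
    rw [← Finset.sum_sub_distrib]
    exact Finset.sum_congr rfl fun i _ => by simp [sub_mul]
  rw [hsub]; omega

theorem main : ∃ T : Finset (Fin n → ℤ),
    (AddSubmonoid.closure (T : Set (Fin n → ℤ)) : Set (Fin n → ℤ)) = (M S : Set _) := by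
  classical
  set E : Set (Idx S → ℕ) := phi S '' ((M S : Set (Fin n → ℤ)) \ {0}) with hE
  set Min : Set (Idx S → ℕ) := {p ∈ E | ∀ q ∈ E, q ≤ p → q = p} with hMin
  have hwo : IsWellOrder ℕ (· < ·) := by infer_instance
  have hpwo : ∀ s : Set (Idx S → ℕ), s.IsPWO :=
    fun s => Set.isPWO_of_wellQuasiOrderedLE s
  have hanti : IsAntichain (· ≤ ·) Min := fun p hp q hq hne hle => hne (hq.2 p hp.1 hle)
  have hMinFin : Min.Finite :=
    hanti.finite_of_partiallyWellOrderedOn (hpwo Min)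
  set Tset : Set (Fin n → ℤ) := ((M S : Set (Fin n → ℤ)) \ {0}) ∩ phi S ⁻¹' Min with hTset
  have hTfin : Tset.Finite :=
    (hMinFin.preimage ((phi_inj S).injOn)).subset Set.inter_subset_right
  refine ⟨hTfin.toFinset, ?_⟩
  have hcoe : (hTfin.toFinset : Set (Fin n → ℤ)) = Tset := hTfin.coe_toFinset
  rw [hcoe]
  apply Set.Subset.antisymm
  · have : AddSubmonoid.closure Tset ≤ M S := by
      rw [AddSubmonoid.closure_le]
      exact fun u hu => hu.1.1
    exact this
  · intro u hu
    have step : ∀ k : ℕ, ∀ u, u ∈ M S → meas u ≤ k →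
        u ∈ AddSubmonoid.closure Tset := by
      intro k
      induction k using Nat.strong_induction_on with
      | _ k ih =>
        intro u hu hk
        by_cases h0 : u = 0
        · subst h0; exact zero_mem _
        · have huE : phi S u ∈ E := ⟨u, ⟨hu, h0⟩, rfl⟩
          set A : Set (Idx S → ℕ) := {q ∈ E | q ≤ phi S u} with hA
          have hAne : A.Nonempty := ⟨phi S u, huE, le_rfl⟩
          have hWF : A.IsWF := (hpwo A).isWF
          set p := hWF.min hAne with hp
          have hpA : p ∈ A := hWF.min_mem hAne
          have hpMin : p ∈ Min := by
            refine ⟨hpA.1, fun q hq hqp => ?_⟩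
            by_contra hne
            exact hWF.not_lt_min hAne ⟨hq, hqp.trans hpA.2⟩ (hqp.lt_of_ne hne)
          obtain ⟨t, ⟨htM, ht0⟩, hpt⟩ := hpA.1
          have ht0' : t ≠ 0 := ht0
          have hphile : phi S t ≤ phi S u := hpt ▸ hpA.2
          have htT : t ∈ Tset := ⟨⟨htM, ht0⟩, by
            rw [Set.mem_preimage, hpt]; exact hpMin⟩
          have hsubM : u - t ∈ M S := sub_mem S hu htM hphile
          have hlt : meas (u - t) < meas u := meas_sub_lt S hphile ht0'
          have hmem : u - t ∈ AddSubmonoid.closure Tset :=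
            ih (meas (u - t)) (lt_of_lt_of_le hlt hk) (u - t) hsubM le_rfl
          have hut : u = t + (u - t) := by ring
          rw [hut]
          exact add_mem (AddSubmonoid.subset_closure htT) hmem
    exact step (meas u) u hu le_rfl

lemma bridge : latticeDual (ratConeOf S) = (M S : Set (Fin n → ℤ)) := by
  ext u
  constructor
  · intro hu v hv
    have hmem : (fun i => (v i : ℝ)) ∈ ratConeOf S := by
      refine ⟨fun w => if w = v then 1 else 0, fun w => by positivity, ?_⟩
      rw [eq_comm]
      simp [ite_smul, Finset.sum_ite_eq', hv]
    have h := hu _ hmem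
    have h2 : (0:ℝ) ≤ ((∑ i, u i * v i : ℤ) : ℝ) := by push_cast; exact h
    exact_mod_cast h2
  · rintro hu x ⟨c, hc, rfl⟩
    have key : ∑ i, (u i : ℝ) * (∑ v ∈ S, c v • (fun i => ((v : Fin n → ℤ) i : ℝ))) i
        = ∑ v ∈ S, c v * ((∑ i, u i * v i : ℤ) : ℝ) := by
      have h1 : ∀ i, ((∑ v ∈ S, c v • (fun i => ((v : Fin n → ℤ) i : ℝ))) i)
          = ∑ v ∈ S, c v * (v i : ℝ) := by intro i; simp
      simp only [h1, Finset.mul_sum]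
      rw [Finset.sum_comm]
      refine Finset.sum_congr rfl fun v _ => ?_
      push_cast
      rw [Finset.mul_sum]
      exact Finset.sum_congr rfl fun i _ => by ring
    rw [key]
    refine Finset.sum_nonneg fun v hv => mul_nonneg (hc v) ?_
    exact_mod_cast hu v hv


end GordanAux

/-- Gordan's Lemma: for a rational polyhedral cone `σ`, the monoid `S_σ = σ∨ ∩ M_ℤ`
is finitely generated. -/
theorem gordan {n : ℕ} (S : Finset (Fin n → ℤ)) :
    ∃ T : Finset (Fin n → ℤ),
      (AddSubmonoid.closure (T : Set (Fin n → ℤ)) : Set (Fin n → ℤ)) =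
        latticeDual (ratConeOf S) := by
  obtain ⟨T, hT⟩ := GordanAux.main S
  exact ⟨T, hT.trans (GordanAux.bridge S).symm⟩
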